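/- Let 0 < b ≤ a be real numbers. Then the function f(x) = log(1 + a·x)/log(1 + b·x) is decreasing on (0, ∞). -/

import Mathlib

open Real Set

lemma aux_hasDerivAt (t : ℝ) (ht0 : 0 < t) :
    HasDerivAt (fun t : ℝ => (1 + t) * Real.log (1 + t) / t)
      ((t - Real.log (1 + t)) / t ^ 2) t := by
  have h1t : (0:ℝ) < 1 + t := by linarith
  have hlog : HasDerivAt (fun t : ℝ => Real.log (1 + t)) (1 / (1 + t)) t := by
    have := (Real.hasDerivAt_log h1t.ne').comp t ((hasDerivAt_id t).const_add 1)
    simpa [Function.comp_def] using this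
  have hnum : HasDerivAt (fun t : ℝ => (1 + t) * Real.log (1 + t))
      (1 * Real.log (1 + t) + (1 + t) * (1 / (1 + t))) t :=
    ((hasDerivAt_id t).const_add 1).mul hlog
  have := hnum.div (hasDerivAt_id t) ht0.ne'
  refine this.congr_deriv ?_
  rw [mul_one_div_cancel h1t.ne', id_eq]
  ring

lemma aux_mono : MonotoneOn (fun t : ℝ => (1 + t) * Real.log (1 + t) / t) (Set.Ioi 0) := by
  have hint : interior (Set.Ioi (0:ℝ)) = Set.Ioi 0 := interior_Ioi
  apply monotoneOn_of_deriv_nonneg (convex_Ioi 0)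
  · exact fun t ht => (aux_hasDerivAt t ht).continuousAt.continuousWithinAt
  · rw [hint]
    exact fun t ht => (aux_hasDerivAt t ht).differentiableAt.differentiableWithinAt
  · rw [hint]
    intro t ht
    rw [(aux_hasDerivAt t ht).deriv]
    have h1t : (0:ℝ) < 1 + t := by linarith [Set.mem_Ioi.mp ht]
    have hlog : Real.log (1 + t) ≤ (1 + t) - 1 := Real.log_le_sub_one_of_pos h1t
    have ht0 : (0:ℝ) < t := ht
    apply div_nonneg (by linarith) (by positivity)

lemma key_ineq (u v : ℝ) (hu : 0 < u) (huv : u ≤ v) :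
    v * ((1 + u) * Real.log (1 + u)) ≤ u * ((1 + v) * Real.log (1 + v)) := by
  have hv : 0 < v := lt_of_lt_of_le hu huv
  have := aux_mono (Set.mem_Ioi.mpr hu) (Set.mem_Ioi.mpr hv) huv
  simp only at this
  rw [div_le_div_iff₀ hu hv] at this
  nlinarith [this]

theorem log_ratio_antitoneOn (a b : ℝ) (hb : 0 < b) (hba : b ≤ a) :
    AntitoneOn (fun x : ℝ => Real.log (1 + a * x) / Real.log (1 + b * x))
      (Set.Ioi (0 : ℝ)) := by
  have ha : 0 < a := lt_of_lt_of_le hb hba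
  have hderiv : ∀ x ∈ Set.Ioi (0:ℝ),
      HasDerivAt (fun x : ℝ => Real.log (1 + a * x) / Real.log (1 + b * x))
        (((a / (1 + a * x)) * Real.log (1 + b * x) -
          Real.log (1 + a * x) * (b / (1 + b * x))) / (Real.log (1 + b * x)) ^ 2) x := by
    intro x hx
    have hx0 : (0:ℝ) < x := hx
    have hax : (0:ℝ) < 1 + a * x := by nlinarith
    have hbx : (0:ℝ) < 1 + b * x := by nlinarith
    have hlogbx : 0 < Real.log (1 + b * x) := Real.log_pos (by nlinarith)
    have hloga : HasDerivAt (fun x : ℝ => Real.log (1 + a * x)) (a / (1 + a * x)) x := by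
      have := (Real.hasDerivAt_log hax.ne').comp x
        (((hasDerivAt_id x).const_mul a).const_add 1)
      simpa [div_eq_inv_mul, Function.comp_def] using this
    have hlogb : HasDerivAt (fun x : ℝ => Real.log (1 + b * x)) (b / (1 + b * x)) x := by
      have := (Real.hasDerivAt_log hbx.ne').comp x
        (((hasDerivAt_id x).const_mul b).const_add 1)
      simpa [div_eq_inv_mul, Function.comp_def] using this
    exact hloga.div hlogb hlogbx.ne'
  apply antitoneOn_of_deriv_nonpos (convex_Ioi 0)
  · exact fun x hx => (hderiv x hx).continuousAt.continuousWithinAt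
  · rw [interior_Ioi]
    exact fun x hx => (hderiv x hx).differentiableAt.differentiableWithinAt
  · rw [interior_Ioi]
    intro x hx
    rw [(hderiv x hx).deriv]
    have hx0 : (0:ℝ) < x := hx
    have hax : (0:ℝ) < 1 + a * x := by nlinarith
    have hbx : (0:ℝ) < 1 + b * x := by nlinarith
    apply div_nonpos_of_nonpos_of_nonneg _ (by positivity)
    have hkey := key_ineq (b * x) (a * x) (by positivity) (by nlinarith)
    -- hkey : a*x * ((1+b*x)*log(1+b*x)) ≤ b*x * ((1+a*x)*log(1+a*x))
    rw [sub_nonpos, div_mul_eq_mul_div, ← mul_div_assoc, div_le_div_iff₀ hax hbx]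
    nlinarith [hkey]
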